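/- In A_g (g ≥ 2, n ≥ 3), for distinct i, j ∈ {2,…,n}: x_1 x_j · (x_i y_j) = −x_1 x_i ω_j + ω_1 x_i x_j, and y_1 x_j · (x_i y_j) = −y_1 x_i ω_j + ω_1 x_i y_j. -/

import Mathlib

/-- Generators of the rational cohomology of the `n`-fold power of a genus-`g` surface:
`a i p`, `b i p` in degree 1 and `w i` (the class `ω_i`) in degree 2.  The indices are
`0`-based: `a i p` stands for the class `a_{i+1}(p+1)` of the paper. -/
inductive SurfGen (n g : ℕ) : Type
  | a (i : Fin n) (p : Fin g)
  | b (i : Fin n) (p : Fin g)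
  | w (i : Fin n)

/-- The cohomological degree of a generator. -/
def SurfGen.deg {n g : ℕ} : SurfGen n g → ℕ
  | .a _ _ => 1
  | .b _ _ => 1
  | .w _ => 2

open FreeAlgebra in
/-- The defining relations of `H^*(Σ_g^{×n}; ℚ)`: within each factor,
`a_i(p)a_i(q) = b_i(p)b_i(q) = 0`, `a_i(p)b_i(q) = δ_{pq} ω_i`, together with
graded (Koszul-signed) commutativity of the generators. -/
inductive SurfRel (n g : ℕ) :
    FreeAlgebra ℚ (SurfGen n g) → FreeAlgebra ℚ (SurfGen n g) → Prop
  | aa (i : Fin n) (p q : Fin g) :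
      SurfRel n g (ι ℚ (SurfGen.a i p) * ι ℚ (SurfGen.a i q)) 0
  | bb (i : Fin n) (p q : Fin g) :
      SurfRel n g (ι ℚ (SurfGen.b i p) * ι ℚ (SurfGen.b i q)) 0
  | ab_eq (i : Fin n) (p : Fin g) :
      SurfRel n g (ι ℚ (SurfGen.a i p) * ι ℚ (SurfGen.b i p)) (ι ℚ (SurfGen.w i))
  | ab_ne (i : Fin n) (p q : Fin g) : p ≠ q →
      SurfRel n g (ι ℚ (SurfGen.a i p) * ι ℚ (SurfGen.b i q)) 0
  | koszul (u v : SurfGen n g) :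
      SurfRel n g (ι ℚ u * ι ℚ v)
        (((-1 : ℚ) ^ (u.deg * v.deg)) • (ι ℚ v * ι ℚ u))

/-- `H^*(Σ_g^{×n}; ℚ)`, presented by generators and relations. -/
def SurfCoh (n g : ℕ) : Type := RingQuot (SurfRel n g)

noncomputable instance (n g : ℕ) : Ring (SurfCoh n g) :=
  inferInstanceAs (Ring (RingQuot (SurfRel n g)))

noncomputable instance (n g : ℕ) : Algebra ℚ (SurfCoh n g) :=
  inferInstanceAs (Algebra ℚ (RingQuot (SurfRel n g)))

/-- The class `a_{i+1}(p+1)`. -/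
noncomputable def gA {n g : ℕ} (i : Fin n) (p : Fin g) : SurfCoh n g :=
  RingQuot.mkAlgHom ℚ (SurfRel n g) (FreeAlgebra.ι ℚ (SurfGen.a i p))

/-- The class `b_{i+1}(p+1)`. -/
noncomputable def gB {n g : ℕ} (i : Fin n) (p : Fin g) : SurfCoh n g :=
  RingQuot.mkAlgHom ℚ (SurfRel n g) (FreeAlgebra.ι ℚ (SurfGen.b i p))

/-- The class `ω_{i+1}`. -/
noncomputable def gW {n g : ℕ} (i : Fin n) : SurfCoh n g :=
  RingQuot.mkAlgHom ℚ (SurfRel n g) (FreeAlgebra.ι ℚ (SurfGen.w i))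

/-- The class `x_{i+1}(p+1)`: equal to `a_{i+1}(p+1)` unless `p+1 = 1` and `i+1 ≥ 2`, in which
case it is `a_{i+1}(1) - a_1(1)`. -/
noncomputable def gX {n g : ℕ} [NeZero n] [NeZero g] (i : Fin n) (p : Fin g) : SurfCoh n g :=
  if p = 0 ∧ i ≠ 0 then gA i p - gA 0 p else gA i p

/-- The class `y_{i+1}(p+1)`: equal to `b_{i+1}(p+1)` unless `p+1 = 1` and `i+1 ≥ 2`, in which
case it is `b_{i+1}(1) - b_1(1)`. -/
noncomputable def gY {n g : ℕ} [NeZero n] [NeZero g] (i : Fin n) (p : Fin g) : SurfCoh n g :=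
  if p = 0 ∧ i ≠ 0 then gB i p - gB 0 p else gB i p

/-- The relations defining the quotient algebra `A_g`: all products
`x_i(p)x_j(q)`, `x_i(p)y_j(q)`, `y_i(p)y_j(q)` with `p, q ≥ 2` and `i ≠ j` are set to zero. -/
inductive ARel (n g : ℕ) [NeZero n] [NeZero g] : SurfCoh n g → SurfCoh n g → Prop
  | xx (i j : Fin n) (p q : Fin g) : i ≠ j → p ≠ 0 → q ≠ 0 → ARel n g (gX i p * gX j q) 0
  | xy (i j : Fin n) (p q : Fin g) : i ≠ j → p ≠ 0 → q ≠ 0 → ARel n g (gX i p * gY j q) 0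
  | yy (i j : Fin n) (p q : Fin g) : i ≠ j → p ≠ 0 → q ≠ 0 → ARel n g (gY i p * gY j q) 0

/-- The algebra `A_g`: the quotient of `H^*(Σ_g^{×n}; ℚ)` by the ideal generated by the
products `x_i(p)x_j(q)`, `x_i(p)y_j(q)`, `y_i(p)y_j(q)` with `p, q ≥ 2`, `i ≠ j`. -/
def SurfA (n g : ℕ) [NeZero n] [NeZero g] : Type := RingQuot (ARel n g)

noncomputable instance (n g : ℕ) [NeZero n] [NeZero g] : Ring (SurfA n g) :=
  inferInstanceAs (Ring (RingQuot (ARel n g)))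

noncomputable instance (n g : ℕ) [NeZero n] [NeZero g] : Algebra ℚ (SurfA n g) :=
  inferInstanceAs (Algebra ℚ (RingQuot (ARel n g)))

/-- The quotient map `H^*(Σ_g^{×n}; ℚ) → A_g`. -/
noncomputable def toA (n g : ℕ) [NeZero n] [NeZero g] : SurfCoh n g →ₐ[ℚ] SurfA n g :=
  RingQuot.mkAlgHom ℚ (ARel n g)

/-- The image of `x_{i+1} = x_{i+1}(1)` in `A_g`. -/
noncomputable def xA {n g : ℕ} [NeZero n] [NeZero g] (i : Fin n) : SurfA n g :=
  toA n g (gX i 0)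

/-- The image of `y_{i+1} = y_{i+1}(1)` in `A_g`. -/
noncomputable def yA {n g : ℕ} [NeZero n] [NeZero g] (i : Fin n) : SurfA n g :=
  toA n g (gY i 0)

/-- The image of `ω_{i+1}` in `A_g`. -/
noncomputable def wA {n g : ℕ} [NeZero n] [NeZero g] (i : Fin n) : SurfA n g :=
  toA n g (gW i)


section Aux

private lemma swap3 {R : Type*} [Ring R] {x y : R} (h : x * y = -(y * x)) (z : R) :
    x * (y * z) = -(y * (x * z)) := by
  rw [← mul_assoc, h, neg_mul, mul_assoc]

private lemma sq3 {R : Type*} [Ring R] {x : R} (h : x * x = 0) (z : R) :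
    x * (x * z) = 0 := by
  rw [← mul_assoc, h, zero_mul]

private lemma ringlem {R : Type*} [Ring R] (ai aj bj b0 a0 : R)
    (ha0a0 : a0 * a0 = 0) (hb0b0 : b0 * b0 = 0)
    (ha0ai : a0 * ai = -(ai * a0)) (ha0aj : a0 * aj = -(aj * a0))
    (ha0bj : a0 * bj = -(bj * a0)) (ha0b0 : a0 * b0 = -(b0 * a0))
    (hb0ai : b0 * ai = -(ai * b0)) (hb0aj : b0 * aj = -(aj * b0))
    (hb0bj : b0 * bj = -(bj * b0)) (hajai : aj * ai = -(ai * aj)) :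
    (a0 * (aj - a0) * ((ai - a0) * (bj - b0)) =
        -(a0 * (ai - a0) * (aj * bj)) + (a0 * b0) * ((ai - a0) * (aj - a0))) ∧
      (b0 * (aj - a0) * ((ai - a0) * (bj - b0)) =
        -(b0 * (ai - a0) * (aj * bj)) + (a0 * b0) * ((ai - a0) * (bj - b0))) := by
  constructor <;>
  · simp only [mul_sub, sub_mul, mul_assoc, mul_neg, neg_mul, neg_neg, mul_zero, zero_mul,
      neg_zero, ha0a0, hb0b0, ha0ai, ha0aj, ha0bj, ha0b0, hb0ai, hb0aj, hb0bj, hajai,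
      swap3 ha0ai, swap3 ha0aj, swap3 ha0bj, swap3 ha0b0, swap3 hb0ai, swap3 hb0aj,
      swap3 hb0bj, swap3 hajai, sq3 ha0a0, sq3 hb0b0]
    abel

section CohRel
variable {n g : ℕ}

private lemma coh_rel {x y : FreeAlgebra ℚ (SurfGen n g)} (h : SurfRel n g x y) :
    RingQuot.mkAlgHom ℚ (SurfRel n g) x = RingQuot.mkAlgHom ℚ (SurfRel n g) y :=
  RingQuot.mkAlgHom_rel ℚ h

private lemma gAA (i : Fin n) (p q : Fin g) : gA i p * gA i q = (0 : SurfCoh n g) := by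
  have h := coh_rel (SurfRel.aa i p q)
  simp only [map_mul, map_zero] at h
  exact h

private lemma gBB (i : Fin n) (p q : Fin g) : gB i p * gB i q = (0 : SurfCoh n g) := by
  have h := coh_rel (SurfRel.bb i p q)
  simp only [map_mul, map_zero] at h
  exact h

private lemma gABeq (i : Fin n) (p : Fin g) : gA i p * gB i p = (gW i : SurfCoh n g) := by
  have h := coh_rel (SurfRel.ab_eq i p)
  simp only [map_mul] at h
  exact h

private lemma gkoszul (u v : SurfGen n g) (hu : u.deg = 1) (hv : v.deg = 1) :
    RingQuot.mkAlgHom ℚ (SurfRel n g) (FreeAlgebra.ι ℚ u) *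
        RingQuot.mkAlgHom ℚ (SurfRel n g) (FreeAlgebra.ι ℚ v) =
      -(RingQuot.mkAlgHom ℚ (SurfRel n g) (FreeAlgebra.ι ℚ v) *
          RingQuot.mkAlgHom ℚ (SurfRel n g) (FreeAlgebra.ι ℚ u)) := by
  have h := coh_rel (SurfRel.koszul u v)
  simpa only [hu, hv, mul_one, pow_one, map_mul, map_smul, map_neg, neg_smul, one_smul] using h

private lemma gAAanti (i k : Fin n) (p q : Fin g) :
    gA i p * gA k q = -(gA k q * gA i p : SurfCoh n g) :=
  gkoszul (SurfGen.a i p) (SurfGen.a k q) rfl rfl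

private lemma gABanti (i k : Fin n) (p q : Fin g) :
    gA i p * gB k q = -(gB k q * gA i p : SurfCoh n g) :=
  gkoszul (SurfGen.a i p) (SurfGen.b k q) rfl rfl

private lemma gBAanti (i k : Fin n) (p q : Fin g) :
    gB i p * gA k q = -(gA k q * gB i p : SurfCoh n g) :=
  gkoszul (SurfGen.b i p) (SurfGen.a k q) rfl rfl

private lemma gBBanti (i k : Fin n) (p q : Fin g) :
    gB i p * gB k q = -(gB k q * gB i p : SurfCoh n g) :=
  gkoszul (SurfGen.b i p) (SurfGen.b k q) rfl rfl

end CohRel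

private lemma coh_key {n g : ℕ} [NeZero n] [NeZero g] (i j : Fin n) (hi : i ≠ 0) (hj : j ≠ 0) :
    ((gX 0 0 : SurfCoh n g) * gX j 0 * (gX i 0 * gY j 0) =
        -(gX 0 0 * gX i 0 * gW j) + gW 0 * (gX i 0 * gX j 0)) ∧
      ((gY 0 0 : SurfCoh n g) * gX j 0 * (gX i 0 * gY j 0) =
        -(gY 0 0 * gX i 0 * gW j) + gW 0 * (gX i 0 * gY j 0)) := by
  have hx0 : (gX 0 0 : SurfCoh n g) = gA 0 0 := by simp [gX]
  have hy0 : (gY 0 0 : SurfCoh n g) = gB 0 0 := by simp [gY]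
  have hxi : (gX i 0 : SurfCoh n g) = gA i 0 - gA 0 0 := by simp [gX, hi]
  have hxj : (gX j 0 : SurfCoh n g) = gA j 0 - gA 0 0 := by simp [gX, hj]
  have hyj : (gY j 0 : SurfCoh n g) = gB j 0 - gB 0 0 := by simp [gY, hj]
  have hw0 : (gW 0 : SurfCoh n g) = gA 0 0 * gB 0 0 := (gABeq 0 0).symm
  have hwj : (gW j : SurfCoh n g) = gA j 0 * gB j 0 := (gABeq j 0).symm
  rw [hx0, hy0, hxi, hxj, hyj, hw0, hwj]
  exact ringlem (gA i 0) (gA j 0) (gB j 0) (gB 0 0) (gA 0 0)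
    (gAA 0 0 0) (gBB 0 0 0)
    (gAAanti 0 i 0 0) (gAAanti 0 j 0 0) (gABanti 0 j 0 0) (gABanti 0 0 0 0)
    (gBAanti 0 i 0 0) (gBAanti 0 j 0 0) (gBBanti 0 j 0 0) (gAAanti j i 0 0)

end Aux

/-- In `A_g` (`g ≥ 2`, `n ≥ 3`), for distinct `i, j ∈ {2,…,n}`:
`x_1 x_j (x_i y_j) = -x_1 x_i ω_j + ω_1 x_i x_j` and
`y_1 x_j (x_i y_j) = -y_1 x_i ω_j + ω_1 x_i y_j`. -/
theorem stmt11 (n g : ℕ) [NeZero n] [NeZero g] (hn : 3 ≤ n) (hg : 2 ≤ g)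
    (i j : Fin n) (hi : i ≠ 0) (hj : j ≠ 0) (hij : i ≠ j) :
    xA 0 * xA j * (xA i * yA j) = (-(xA 0 * xA i * wA j) + wA 0 * (xA i * xA j) : SurfA n g) ∧
      yA 0 * xA j * (xA i * yA j) =
        (-(yA 0 * xA i * wA j) + wA 0 * (xA i * yA j) : SurfA n g) := by
  obtain ⟨h1, h2⟩ := coh_key (n := n) (g := g) i j hi hj
  constructor
  · have := congrArg (toA n g) h1
    simpa only [map_mul, map_add, map_neg, xA, yA, wA] using this
  · have := congrArg (toA n g) h2
    simpa only [map_mul, map_add, map_neg, xA, yA, wA] using this
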